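/- Let T : M → N be a triangulated functor between triangulated categories. The full subcategory N_T of N consisting of objects where the left adjoint (resp. right adjoint) S of T is defined is a triangulated subcategory of N: it is stable under shifts, and if f : M → N is a morphism of N_T then any cone of f lies in N_T, with S of the cone represented by a cone of S(f). -/

import Mathlib

open CategoryTheory CategoryTheory.Limits CategoryTheory.Pretriangulated Opposite

universe v u₁ u₂

/-- `P` corepresents `A ↦ (X ⟶ T A)`: the left adjoint `S` of `T` is defined at `X`, with
value `P`. -/
def LeftAdjointAt {M : Type u₁} [Category.{v} M] {N : Type u₂} [Category.{v} N]
    (T : M ⥤ N) (X : N) (P : M) : Prop :=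
  Nonempty ((T ⋙ coyoneda.obj (op X)) ≅ coyoneda.obj (op P))

namespace Stmt7Aux

variable {M : Type u₁} [Category.{v} M] {N : Type u₂} [Category.{v} N]

lemma inv_app_eq (T : M ⥤ N) {X : N} {P : M}
    (e : (T ⋙ coyoneda.obj (op X)) ≅ coyoneda.obj (op P)) {A : M} (β : P ⟶ A) :
    e.inv.app A β = e.inv.app P (𝟙 P) ≫ T.map β := by
  have h := types_congr_hom (e.inv.naturality β) (𝟙 P)
  dsimp at h
  rw [Category.id_comp] at h
  exact h

lemma bij_of_iso (T : M ⥤ N) {X : N} {P : M}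
    (e : (T ⋙ coyoneda.obj (op X)) ≅ coyoneda.obj (op P)) (A : M) :
    Function.Bijective (fun β : P ⟶ A => e.inv.app P (𝟙 P) ≫ T.map β) := by
  have h : (fun β : P ⟶ A => e.inv.app P (𝟙 P) ≫ T.map β) = e.inv.app A := by
    funext β
    exact (inv_app_eq T e β).symm
  rw [h]
  exact ((e.app A).symm.toEquiv).bijective

lemma ladj_of_bij (T : M ⥤ N) {X : N} {P : M} (u : X ⟶ T.obj P)
    (hu : ∀ A : M, Function.Bijective (fun β : P ⟶ A => u ≫ T.map β)) :
    LeftAdjointAt T X P := by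
  let η : coyoneda.obj (op P) ⟶ T ⋙ coyoneda.obj (op X) :=
    { app := fun A => TypeCat.ofHom (fun (β : P ⟶ A) => u ≫ T.map β)
      naturality := fun A B α => by
        ext β
        dsimp
        rw [T.map_comp, Category.assoc] }
  have h1 : ∀ A, IsIso (η.app A) := fun A => (isIso_iff_bijective _).2 (hu A)
  have : IsIso η := NatIso.isIso_of_isIso_app η
  exact ⟨(asIso η).symm⟩

lemma bij_shift [HasShift M ℤ] [HasShift N ℤ] (T : M ⥤ N) [T.CommShift ℤ]
    {X : N} {P : M} (u : X ⟶ T.obj P)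
    (hu : ∀ A : M, Function.Bijective (fun β : P ⟶ A => u ≫ T.map β))
    (n : ℤ) (A : M) :
    Function.Bijective (fun γ : (P⟦n⟧ : M) ⟶ A =>
      (u⟦n⟧' ≫ (T.commShiftIso n).inv.app P) ≫ T.map γ) := by
  set F := fun γ : (P⟦n⟧ : M) ⟶ A =>
      (u⟦n⟧' ≫ (T.commShiftIso n).inv.app P) ≫ T.map γ with hF
  let i : ((A⟦(-n : ℤ)⟧)⟦n⟧ : M) ≅ A := (shiftEquiv M n).counitIso.app A
  let sM : (P ⟶ (A⟦(-n : ℤ)⟧ : M)) ≃ ((P⟦n⟧ : M) ⟶ (A⟦(-n : ℤ)⟧)⟦n⟧) :=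
    (Functor.FullyFaithful.ofFullyFaithful (shiftFunctor M n)).homEquiv
  let ψ : (P ⟶ (A⟦(-n : ℤ)⟧ : M)) ≃ ((P⟦n⟧ : M) ⟶ A) :=
    sM.trans ((Iso.refl _).homCongr i)
  let sN : (X ⟶ T.obj (A⟦(-n : ℤ)⟧)) ≃ ((X⟦n⟧ : N) ⟶ (T.obj (A⟦(-n : ℤ)⟧))⟦n⟧) :=
    (Functor.FullyFaithful.ofFullyFaithful (shiftFunctor N n)).homEquiv
  let cIso : ((T.obj (A⟦(-n : ℤ)⟧))⟦n⟧ : N) ≅ T.obj A :=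
    (T.commShiftIso n).symm.app (A⟦(-n : ℤ)⟧) ≪≫ T.mapIso i
  let χ₃ : ((X⟦n⟧ : N) ⟶ (T.obj (A⟦(-n : ℤ)⟧))⟦n⟧) ≃ ((X⟦n⟧ : N) ⟶ T.obj A) :=
    (Iso.refl _).homCongr cIso
  have key : ∀ β : P ⟶ (A⟦(-n : ℤ)⟧ : M), F (ψ β) = χ₃ (sN (u ≫ T.map β)) := by
    intro β
    have hnat : (T.map β)⟦n⟧' ≫ (T.commShiftIso n).inv.app (A⟦(-n : ℤ)⟧)
        = (T.commShiftIso n).inv.app P ≫ T.map (β⟦n⟧') :=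
      (T.commShiftIso n).inv.naturality β
    dsimp [F, ψ, sM, sN, χ₃, cIso, Iso.homCongr_apply, Functor.FullyFaithful.homEquiv_apply]
    simp only [Iso.homCongr_apply, Functor.FullyFaithful.homEquiv_apply, Iso.refl_inv, Iso.trans_hom,
      Functor.mapIso_hom, Iso.app_hom, Iso.symm_hom, Category.id_comp, Functor.map_comp, Category.assoc]
    rw [reassoc_of% hnat]
  have hFψ : Function.Bijective (F ∘ ψ) := by
    have h2 : (F ∘ ψ) = χ₃ ∘ sN ∘ (fun β : P ⟶ (A⟦(-n : ℤ)⟧ : M) => u ≫ T.map β) := by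
      funext β
      exact key β
    rw [h2]
    exact χ₃.bijective.comp (sN.bijective.comp (hu _))
  have hFeq : F = (F ∘ ψ) ∘ ψ.symm := by
    funext γ
    simp [Function.comp]
  rw [hFeq]
  exact hFψ.comp ψ.symm.bijective

end Stmt7Aux

open Stmt7Aux

/-- Let `T : M ⥤ N` be a triangulated functor between triangulated
categories.  The full subcategory `N_T` of objects where the left adjoint `S` of `T` is
defined is triangulated: it is stable under shifts (with `S (X⟦n⟧) = (S X)⟦n⟧`), and for any
distinguished triangle `(X, Y, Z, f, g, h)` of `N` with `X, Y ∈ N_T` (corepresented by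
`P, Q`, the morphism `f` corresponding to `Sf : P ⟶ Q`), the cone `Z` lies in `N_T` and
`S Z` is represented by a cone of `Sf`. -/
theorem stmt7 {M : Type u₁} [Category.{v} M] {N : Type u₂} [Category.{v} N]
    [Preadditive M] [Preadditive N] [HasZeroObject M] [HasZeroObject N]
    [HasShift M ℤ] [HasShift N ℤ]
    [∀ n : ℤ, (shiftFunctor M n).Additive] [∀ n : ℤ, (shiftFunctor N n).Additive]
    [Pretriangulated M] [Pretriangulated N]
    (T : M ⥤ N) [T.Additive] [T.CommShift ℤ] [T.IsTriangulated] :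
    (∀ (n : ℤ) (X : N) (P : M), LeftAdjointAt T X P → LeftAdjointAt T (X⟦n⟧) (P⟦n⟧)) ∧
    (∀ (Tr : Triangle N), (Tr ∈ distTriang N) →
      ∀ (P Q : M)
        (eX : (T ⋙ coyoneda.obj (op Tr.obj₁)) ≅ coyoneda.obj (op P))
        (eY : (T ⋙ coyoneda.obj (op Tr.obj₂)) ≅ coyoneda.obj (op Q))
        (Sf : P ⟶ Q),
        eY.inv ≫ Functor.whiskerLeft T (coyoneda.map Tr.mor₁.op) ≫ eX.hom = coyoneda.map Sf.op →
        ∃ (R : M) (g' : Q ⟶ R) (h' : R ⟶ P⟦(1 : ℤ)⟧),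
          (Triangle.mk Sf g' h' ∈ distTriang M) ∧ LeftAdjointAt T Tr.obj₃ R) := by
  constructor
  · rintro n X P ⟨e⟩
    exact ladj_of_bij T _ (bij_shift T _ (bij_of_iso T e) n)
  · intro Tr hTr P Q eX eY Sf hSf
    obtain ⟨R, g', h', hTr'⟩ := Pretriangulated.distinguished_cocone_triangle Sf
    set u : Tr.obj₁ ⟶ T.obj P := eX.inv.app P (𝟙 P) with hu_def
    set v : Tr.obj₂ ⟶ T.obj Q := eY.inv.app Q (𝟙 Q) with hv_def
    have hu : ∀ A : M, Function.Bijective (fun β : P ⟶ A => u ≫ T.map β) :=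
      fun A => bij_of_iso T eX A
    have hv : ∀ A : M, Function.Bijective (fun β : Q ⟶ A => v ≫ T.map β) :=
      fun A => bij_of_iso T eY A
    -- the commutative square `Tr.mor₁ ≫ v = u ≫ T.map Sf`
    have hsq : Tr.mor₁ ≫ v = u ≫ T.map Sf := by
      have h0 := types_congr_hom (NatTrans.congr_app hSf Q) (𝟙 Q)
      dsimp at h0
      have h1 := congr_arg (eX.inv.app Q) h0
      have h2 := types_congr_hom (eX.hom_inv_id_app Q) (Tr.mor₁ ≫ v)
      dsimp at h2
      rw [h2] at h1
      rw [h1, Category.comp_id, inv_app_eq T eX Sf]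
    -- complete to a morphism of triangles
    have hTrM := T.map_distinguished _ hTr'
    obtain ⟨w, hw₁, hw₂⟩ : ∃ w : Tr.obj₃ ⟶ T.obj R, Tr.mor₂ ≫ w = v ≫ T.map g' ∧
        Tr.mor₃ ≫ u⟦(1 : ℤ)⟧' = w ≫ (T.map h' ≫ (T.commShiftIso (1 : ℤ)).hom.app P) :=
      Pretriangulated.complete_distinguished_triangle_morphism
      Tr (T.mapTriangle.obj (Triangle.mk Sf g' h')) hTr hTrM u v (by exact hsq)
    -- shifted universal elements
    set u₁ : (Tr.obj₁⟦(1 : ℤ)⟧ : N) ⟶ T.obj (P⟦(1 : ℤ)⟧) :=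
      u⟦(1 : ℤ)⟧' ≫ (T.commShiftIso (1 : ℤ)).inv.app P with hu₁_def
    set v₁ : (Tr.obj₂⟦(1 : ℤ)⟧ : N) ⟶ T.obj (Q⟦(1 : ℤ)⟧) :=
      v⟦(1 : ℤ)⟧' ≫ (T.commShiftIso (1 : ℤ)).inv.app Q with hv₁_def
    have hu₁ : ∀ A : M, Function.Bijective
        (fun γ : (P⟦(1 : ℤ)⟧ : M) ⟶ A => u₁ ≫ T.map γ) :=
      fun A => bij_shift T u hu (1 : ℤ) A
    have hv₁ : ∀ A : M, Function.Bijective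
        (fun γ : (Q⟦(1 : ℤ)⟧ : M) ⟶ A => v₁ ≫ T.map γ) :=
      fun A => bij_shift T v hv (1 : ℤ) A
    have hw₃ : Tr.mor₃ ≫ u₁ = w ≫ T.map h' := by
      rw [hu₁_def, ← Category.assoc, hw₂]
      simp
    have hsq₁ : u₁ ≫ T.map (Sf⟦(1 : ℤ)⟧') = Tr.mor₁⟦(1 : ℤ)⟧' ≫ v₁ := by
      have hnat : (T.map Sf)⟦(1 : ℤ)⟧' ≫ (T.commShiftIso (1 : ℤ)).inv.app Q
          = (T.commShiftIso (1 : ℤ)).inv.app P ≫ T.map (Sf⟦(1 : ℤ)⟧') :=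
        (T.commShiftIso (1 : ℤ)).inv.naturality Sf
      rw [hu₁_def, hv₁_def, Category.assoc, ← hnat, ← Category.assoc,
        ← Functor.map_comp, ← hsq, Functor.map_comp, Category.assoc]
    -- bijectivity at the cone
    have hZbij : ∀ A : M, Function.Bijective (fun α : R ⟶ A => w ≫ T.map α) := by
      intro A
      have hker : ∀ α : R ⟶ A, w ≫ T.map α = 0 → α = 0 := by
        intro α h0
        have step1 : g' ≫ α = 0 := by
          apply (hv A).injective
          dsimp
          rw [T.map_comp, ← Category.assoc, ← hw₁, Category.assoc, h0]
          simp
        obtain ⟨γ, hγ⟩ : ∃ γ : P⟦(1 : ℤ)⟧ ⟶ A, α = h' ≫ γ :=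
          Pretriangulated.Triangle.yoneda_exact₃ _ hTr' α step1
        have step3 : Tr.mor₃ ≫ (u₁ ≫ T.map γ) = 0 := by
          rw [← Category.assoc, hw₃, Category.assoc, ← T.map_comp, ← hγ, h0]
        obtain ⟨ε, hε⟩ : ∃ ε : (Tr.obj₂⟦(1 : ℤ)⟧ : N) ⟶ T.obj A,
            u₁ ≫ T.map γ = (-Tr.mor₁⟦(1 : ℤ)⟧') ≫ ε := Pretriangulated.Triangle.yoneda_exact₃ _
          (Pretriangulated.rot_of_distTriang _ hTr) (u₁ ≫ T.map γ) step3
        obtain ⟨γ', hγ'⟩ := (hv₁ A).surjective (-ε)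
        dsimp at hγ'
        have step6 : γ = Sf⟦(1 : ℤ)⟧' ≫ γ' := by
          apply (hu₁ A).injective
          dsimp
          rw [hε, T.map_comp, ← Category.assoc, hsq₁, Category.assoc, hγ']
          simp
        have hz : h' ≫ Sf⟦(1 : ℤ)⟧' = 0 := by
          exact Pretriangulated.comp_distTriang_mor_zero₃₁ _ hTr'
        rw [hγ, step6, ← Category.assoc, hz, Limits.zero_comp]
      constructor
      · intro α α' hαα'
        have h0 : w ≫ T.map (α - α') = 0 := by
          rw [T.map_sub, Preadditive.comp_sub]
          dsimp at hαα'
          rw [hαα', sub_self]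
        have := hker _ h0
        rwa [sub_eq_zero] at this
      · intro ζ
        obtain ⟨β, hβ⟩ := (hv A).surjective (Tr.mor₂ ≫ ζ)
        dsimp at hβ
        have hSfβ : Sf ≫ β = 0 := by
          apply (hu A).injective
          dsimp
          rw [T.map_comp, ← Category.assoc, ← hsq, Category.assoc, hβ, ← Category.assoc,
            Pretriangulated.comp_distTriang_mor_zero₁₂ _ hTr, Limits.zero_comp]
          simp
        obtain ⟨α₀, hα₀⟩ : ∃ α₀ : R ⟶ A, β = g' ≫ α₀ :=
          Pretriangulated.Triangle.yoneda_exact₂ _ hTr' β hSfβ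
        change R ⟶ A at α₀
        have hδ : Tr.mor₂ ≫ (ζ - w ≫ T.map α₀) = 0 := by
          rw [Preadditive.comp_sub, ← hβ, hα₀, T.map_comp, ← Category.assoc, ← hw₁,
            Category.assoc, sub_self]
        obtain ⟨ε, hε⟩ := Pretriangulated.Triangle.yoneda_exact₃ _ hTr _ hδ
        obtain ⟨γ, hγ⟩ := (hu₁ A).surjective ε
        dsimp at hγ
        refine ⟨α₀ + h' ≫ γ, ?_⟩
        dsimp
        rw [T.map_add, Preadditive.comp_add, T.map_comp, ← Category.assoc, ← hw₃,
          Category.assoc, hγ, ← hε]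
        abel
    exact ⟨R, g', h', hTr', ladj_of_bij T w hZbij⟩
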